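/- The multiplicative guessing leakage GL_m(X → U) = H_G(X) / H_G(X|U) satisfies 1 ≤ GL_m(X → U) ≤ (n+1)/2 for finite random variables X (on an alphabet of size n) and U. -/
import Mathlib


noncomputable def HG {n : ℕ} (p : Fin n → ℝ) : ℝ :=
  Finset.univ.inf' Finset.univ_nonempty
    (fun r : Equiv.Perm (Fin n) => ∑ i, (((r i : ℕ) : ℝ) + 1) * p i)

lemma HG_le_val {n : ℕ} (p : Fin n → ℝ) (r : Equiv.Perm (Fin n)) :
    HG p ≤ ∑ i, (((r i : ℕ) : ℝ) + 1) * p i :=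
  Finset.inf'_le _ (Finset.mem_univ r)

lemma one_le_HG {n : ℕ} (p : Fin n → ℝ) (h0 : ∀ i, 0 ≤ p i) (h1 : ∑ i, p i = 1) :
    1 ≤ HG p := by
  apply Finset.le_inf'
  intro r _
  calc (1:ℝ) = ∑ i, p i := h1.symm
    _ ≤ ∑ i, (((r i : ℕ) : ℝ) + 1) * p i := by
        apply Finset.sum_le_sum
        intro i _
        nlinarith [h0 i, Nat.cast_nonneg (α := ℝ) ((r i : Fin n) : ℕ)]

lemma HG_le_half {n : ℕ} (p : Fin n → ℝ) (h1 : ∑ i, p i = 1) :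
    HG p ≤ ((n:ℝ) + 1) / 2 := by
  have ha := HG_le_val p (Equiv.refl (Fin n))
  have hb := HG_le_val p Fin.revPerm
  have hsum : (∑ i, ((((Equiv.refl (Fin n) i : Fin n) : ℕ) : ℝ) + 1) * p i)
      + (∑ i, ((((Fin.revPerm i : Fin n) : ℕ) : ℝ) + 1) * p i) = (n:ℝ) + 1 := by
    rw [← Finset.sum_add_distrib]
    have key : ∀ i : Fin n, ((((Equiv.refl (Fin n) i : Fin n) : ℕ) : ℝ) + 1) * p i
        + ((((Fin.revPerm i : Fin n) : ℕ) : ℝ) + 1) * p i = ((n:ℝ) + 1) * p i := by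
      intro i
      have hnat : (((Equiv.refl (Fin n) i : Fin n) : ℕ) + 1)
          + (((Fin.revPerm i : Fin n) : ℕ) + 1) = n + 1 := by
        simp only [Equiv.refl_apply, Fin.revPerm_apply, Fin.val_rev]
        have := i.is_lt
        omega
      have hreal : ((((Equiv.refl (Fin n) i : Fin n) : ℕ):ℝ) + 1)
          + ((((Fin.revPerm i : Fin n) : ℕ):ℝ) + 1) = (n:ℝ) + 1 := by
        exact_mod_cast hnat
      rw [← add_mul, hreal]
    rw [Finset.sum_congr rfl (fun i _ => key i), ← Finset.mul_sum, h1, mul_one]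
  linarith

lemma sum_le_HG {n : ℕ} {U : Type*} [Fintype U]
    (pU : U → ℝ) (hU0 : ∀ u, 0 ≤ pU u)
    (pXgU : U → Fin n → ℝ) (pX : Fin n → ℝ)
    (hpX : ∀ i, pX i = ∑ u, pU u * pXgU u i) :
    ∑ u, pU u * HG (pXgU u) ≤ HG pX := by
  apply Finset.le_inf'
  intro r _
  calc ∑ u, pU u * HG (pXgU u)
      ≤ ∑ u, pU u * ∑ i, (((r i : ℕ):ℝ) + 1) * pXgU u i :=
        Finset.sum_le_sum fun u _ =>
          mul_le_mul_of_nonneg_left (HG_le_val _ r) (hU0 u)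
    _ = ∑ u, ∑ i, (((r i : ℕ):ℝ) + 1) * (pU u * pXgU u i) := by
        simp_rw [Finset.mul_sum]; congr 1; funext u; congr 1; funext i; ring
    _ = ∑ i, ∑ u, (((r i : ℕ):ℝ) + 1) * (pU u * pXgU u i) := Finset.sum_comm
    _ = ∑ i, (((r i : ℕ):ℝ) + 1) * pX i := by
        congr 1; funext i; rw [← Finset.mul_sum, hpX i]

/-- The multiplicative guessing leakage
`GL_m(X → U) = H_G(X)/H_G(X|U)` satisfies `1 ≤ GL_m(X → U) ≤ (n+1)/2`. -/
theorem multiplicative_leakage_bounds {n : ℕ} (hn : 0 < n) {U : Type*}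
    [Fintype U]
    (pU : U → ℝ) (hU0 : ∀ u, 0 ≤ pU u) (hU1 : ∑ u, pU u = 1)
    (pXgU : U → Fin n → ℝ)
    (hX0 : ∀ u i, 0 ≤ pXgU u i) (hX1 : ∀ u, ∑ i, pXgU u i = 1)
    (pX : Fin n → ℝ) (hpX : ∀ i, pX i = ∑ u, pU u * pXgU u i) :
    1 ≤ HG pX / (∑ u, pU u * HG (pXgU u)) ∧
    HG pX / (∑ u, pU u * HG (pXgU u)) ≤ ((n : ℝ) + 1) / 2 := by
  set D := ∑ u, pU u * HG (pXgU u) with hD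
  have hD1 : 1 ≤ D := by
    calc (1:ℝ) = ∑ u, pU u * 1 := by simp [hU1]
      _ ≤ D := Finset.sum_le_sum fun u _ =>
          mul_le_mul_of_nonneg_left (one_le_HG _ (hX0 u) (hX1 u)) (hU0 u)
  have hDle : D ≤ HG pX := sum_le_HG pU hU0 pXgU pX hpX
  have hpXsum : ∑ i, pX i = 1 := by
    calc ∑ i, pX i = ∑ i, ∑ u, pU u * pXgU u i := by
          exact Finset.sum_congr rfl fun i _ => hpX i
      _ = ∑ u, ∑ i, pU u * pXgU u i := Finset.sum_comm
      _ = ∑ u, pU u := by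
          exact Finset.sum_congr rfl fun u _ => by
            rw [← Finset.mul_sum, hX1 u, mul_one]
      _ = 1 := hU1
  have hHle : HG pX ≤ ((n:ℝ) + 1) / 2 := HG_le_half pX hpXsum
  constructor
  · exact (one_le_div (by linarith)).2 hDle
  · calc HG pX / D ≤ HG pX := div_le_self (by linarith) hD1
      _ ≤ ((n:ℝ) + 1) / 2 := hHle
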